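/- Let q₊,q₋ ∈ ℂ. The following are equivalent: (i) the signed reflection function φ_{q₊,q₋} is positive definite on B(∞); (ii) φ_{q₊,q₋} is a character of B(∞); (iii) φ_{q₊,q₋} is an extreme character of B(∞). -/

import Mathlib

/-!
STATEMENT 4: for q₊,q₋ ∈ ℂ the following are equivalent:
(i) φ_{q₊,q₋} is positive definite on B(∞);
(ii) φ_{q₊,q₋} is a character of B(∞) (central, positive definite, value 1 at e);
(iii) φ_{q₊,q₋} is an extreme character of B(∞) (an extreme point of the convex set of
characters).

Characters of B(∞) are encoded as functions on the ambient group Perm ℤ which vanish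
outside B(∞) (so that the convex set of characters is faithfully embedded in the
ℝ-module Perm ℤ → ℂ, and its extreme points are exactly the extreme characters).
-/

open scoped ComplexOrder

noncomputable section

namespace TypeB

/-- The nontrivial orbits (cycles) of a permutation. -/
def ntOrbits {X : Type*} (σ : Equiv.Perm X) : Set (Set X) :=
  {O | ∃ i : X, σ i ≠ i ∧ O = {j | σ.SameCycle i j}}

/-- Negation of a set of integers. -/
def negSet (B : Set ℤ) : Set ℤ := (fun x : ℤ => -x) '' B

/-- The negative cycles (orbits invariant under negation). -/
def negOrbits (σ : Equiv.Perm ℤ) : Set (Set ℤ) := {O ∈ ntOrbits σ | negSet O = O}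

/-- The positive cycles (orbits not invariant under negation; they come in mirror pairs). -/
def posOrbits (σ : Equiv.Perm ℤ) : Set (Set ℤ) := {O ∈ ntOrbits σ | negSet O ≠ O}

/-- ‖ρ⁺‖ + ‖ρ⁻‖ for σ of cycle type (ρ⁺,ρ⁻). -/
def expPlus (σ : Equiv.Perm ℤ) : ℕ :=
  (∑ᶠ O ∈ posOrbits σ, (O.ncard - 1)) / 2 + ∑ᶠ O ∈ negOrbits σ, (O.ncard / 2 - 1)

/-- ℓ(ρ⁻): the number of negative cycles of σ. -/
def negCount (σ : Equiv.Perm ℤ) : ℕ := (negOrbits σ).ncard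

/-- The signed reflection function φ_{q₊,q₋}(σ) = q₊^{‖ρ⁺‖+‖ρ⁻‖} q₋^{ℓ(ρ⁻)}. -/
def phi (qp qm : ℂ) (σ : Equiv.Perm ℤ) : ℂ := qp ^ expPlus σ * qm ^ negCount σ

/-- The infinite hyperoctahedral group B(∞): finitary permutations of ℤ∖{0}
commuting with negation. -/
def BInfSet : Set (Equiv.Perm ℤ) :=
  {σ | (∀ i : ℤ, σ (-i) = -σ i) ∧ {i : ℤ | σ i ≠ i}.Finite}

/-- A function on a group is positive definite on a subset S. -/
def IsPosDefOn {G : Type*} [Group G] (S : Set G) (f : G → ℂ) : Prop :=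
  ∀ (k : ℕ) (g : Fin k → G), (∀ i, g i ∈ S) → ∀ z : Fin k → ℂ,
    0 ≤ ∑ i : Fin k, ∑ j : Fin k, z i * (starRingEnd ℂ) (z j) * f ((g j)⁻¹ * g i)

/-- The set of characters of B(∞): central, positive definite, normalized functions,
encoded as functions on Perm ℤ vanishing outside B(∞). -/
def CharSetB : Set (Equiv.Perm ℤ → ℂ) :=
  {f | (∀ σ, σ ∉ BInfSet → f σ = 0) ∧
       (∀ g ∈ BInfSet, ∀ h ∈ BInfSet, f (h * g * h⁻¹) = f g) ∧
       IsPosDefOn BInfSet f ∧ f 1 = 1}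

open Classical in
/-- The signed reflection function, extended by zero outside B(∞). -/
def phiB (qp qm : ℂ) : Equiv.Perm ℤ → ℂ :=
  fun σ => if σ ∈ BInfSet then phi qp qm σ else 0

section Aux

open Equiv Set

lemma BInf_one : (1 : Equiv.Perm ℤ) ∈ BInfSet :=
  ⟨fun i => by simp, by simp [BInfSet]⟩

lemma BInf_mul {σ τ : Equiv.Perm ℤ} (hσ : σ ∈ BInfSet) (hτ : τ ∈ BInfSet) :
    σ * τ ∈ BInfSet := by
  refine ⟨fun i => by simp [Equiv.Perm.mul_apply, hτ.1 i, hσ.1 (τ i)], ?_⟩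
  refine (hσ.2.union hτ.2).subset ?_
  intro x hx
  by_contra h
  simp only [mem_union, mem_setOf_eq, not_or, not_not] at h
  exact hx (by simp [Equiv.Perm.mul_apply, h.2, h.1])

lemma perm_apply_inv_self (σ : Equiv.Perm ℤ) (x : ℤ) : σ (σ⁻¹ x) = x := σ.apply_symm_apply x

lemma perm_inv_apply_self (σ : Equiv.Perm ℤ) (x : ℤ) : σ⁻¹ (σ x) = x := σ.symm_apply_apply x

lemma perm_inv_ne_iff {σ : Equiv.Perm ℤ} {x : ℤ} : σ⁻¹ x ≠ x ↔ σ x ≠ x := by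
  rw [not_iff_not]
  constructor
  · intro hc; nth_rewrite 1 [← hc]; rw [perm_apply_inv_self]
  · intro hc; nth_rewrite 1 [← hc]; rw [perm_inv_apply_self]

lemma BInf_inv {σ : Equiv.Perm ℤ} (hσ : σ ∈ BInfSet) : σ⁻¹ ∈ BInfSet := by
  refine ⟨fun i => ?_, ?_⟩
  · apply σ.injective
    rw [perm_apply_inv_self, hσ.1 (σ⁻¹ i), perm_apply_inv_self]
  · refine hσ.2.subset ?_
    intro x hx
    exact perm_inv_ne_iff.mp hx

/-- Each nontrivial orbit is inside the support. -/
lemma ntOrbit_subset_supp {σ : Equiv.Perm ℤ} {O : Set ℤ} (hO : O ∈ ntOrbits σ) :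
    O ⊆ {x : ℤ | σ x ≠ x} := by
  obtain ⟨i, hi, rfl⟩ := hO
  intro y hy
  have := (Equiv.Perm.SameCycle.apply_eq_self_iff (f := σ) hy)
  simp only [mem_setOf_eq]
  intro hc
  exact hi (this.mpr hc)

lemma ntOrbit_nonempty {σ : Equiv.Perm ℤ} {O : Set ℤ} (hO : O ∈ ntOrbits σ) :
    O.Nonempty := by
  obtain ⟨i, hi, rfl⟩ := hO
  exact ⟨i, Equiv.Perm.SameCycle.refl σ i⟩

lemma ntOrbits_finite {σ : Equiv.Perm ℤ} (h : {x : ℤ | σ x ≠ x}.Finite) :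
    (ntOrbits σ).Finite := by
  refine (h.image (fun i => {j | σ.SameCycle i j})).subset ?_
  rintro O ⟨i, hi, rfl⟩
  exact ⟨i, hi, rfl⟩

lemma ntOrbits_one : ntOrbits (1 : Equiv.Perm ℤ) = ∅ := by
  ext O; simp [ntOrbits]

lemma ntOrbits_inv (σ : Equiv.Perm ℤ) : ntOrbits σ⁻¹ = ntOrbits σ := by
  ext O
  constructor
  · rintro ⟨i, hi, rfl⟩
    exact ⟨i, perm_inv_ne_iff.mp hi, by ext j; simp [Equiv.Perm.sameCycle_inv]⟩
  · rintro ⟨i, hi, rfl⟩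
    exact ⟨i, perm_inv_ne_iff.mpr hi, by ext j; simp [Equiv.Perm.sameCycle_inv]⟩

lemma phi_one (qp qm : ℂ) : phi qp qm 1 = 1 := by
  have h1 : posOrbits (1 : Equiv.Perm ℤ) = ∅ := by
    simp [posOrbits, ntOrbits_one]
  have h2 : negOrbits (1 : Equiv.Perm ℤ) = ∅ := by
    simp [negOrbits, ntOrbits_one]
  simp [phi, expPlus, negCount, h1, h2, finsum_mem_empty]

lemma phi_inv (qp qm : ℂ) (σ : Equiv.Perm ℤ) : phi qp qm σ⁻¹ = phi qp qm σ := by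
  simp [phi, expPlus, negCount, posOrbits, negOrbits, ntOrbits_inv]

end Aux
section Conj

open Equiv Set

lemma orbitSet_conj (h σ : Equiv.Perm ℤ) (i : ℤ) :
    {j | (h * σ * h⁻¹).SameCycle (h i) j} = ⇑h '' {j | σ.SameCycle i j} := by
  ext y
  simp only [mem_setOf_eq, Equiv.Perm.sameCycle_conj, Set.mem_image]
  constructor
  · intro hy
    exact ⟨h⁻¹ y, by simpa using hy, by simp⟩
  · rintro ⟨w, hw, rfl⟩
    simpa using hw

lemma ntOrbits_conj (h σ : Equiv.Perm ℤ) :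
    ntOrbits (h * σ * h⁻¹) = (Set.image ⇑h) '' ntOrbits σ := by
  ext O
  constructor
  · rintro ⟨i, hi, rfl⟩
    refine ⟨{j | σ.SameCycle (h⁻¹ i) j}, ⟨h⁻¹ i, ?_, rfl⟩, ?_⟩
    · intro hc
      exact hi (by rw [Equiv.Perm.mul_apply, Equiv.Perm.mul_apply, hc, perm_apply_inv_self])
    · rw [← orbitSet_conj h σ (h⁻¹ i)]
      simp
  · rintro ⟨O, ⟨i, hi, rfl⟩, rfl⟩
    refine ⟨h i, ?_, (orbitSet_conj h σ i).symm⟩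
    simp only [Equiv.Perm.mul_apply]
    intro hc
    apply hi
    have := h.injective (by simpa using hc : h (σ (h⁻¹ (h i))) = h i)
    simpa using this

lemma negSet_image {h : Equiv.Perm ℤ} (hneg : ∀ x : ℤ, h (-x) = -h x) (O : Set ℤ) :
    negSet (⇑h '' O) = ⇑h '' negSet O := by
  ext y
  simp only [negSet, Set.mem_image]
  constructor
  · rintro ⟨z, ⟨w, hw, rfl⟩, rfl⟩
    exact ⟨-w, ⟨w, hw, rfl⟩, hneg w⟩
  · rintro ⟨z, ⟨w, hw, rfl⟩, rfl⟩
    exact ⟨h w, ⟨w, hw, rfl⟩, (hneg w).symm⟩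

lemma negOrbits_conj {h : Equiv.Perm ℤ} (σ : Equiv.Perm ℤ) (hneg : ∀ x : ℤ, h (-x) = -h x) :
    negOrbits (h * σ * h⁻¹) = (Set.image ⇑h) '' negOrbits σ := by
  have hinj : Function.Injective (Set.image ⇑h) := Set.image_injective.mpr h.injective
  ext O
  constructor
  · rintro ⟨hO, hOneg⟩
    rw [ntOrbits_conj] at hO
    obtain ⟨O', hO', rfl⟩ := hO
    refine ⟨O', ⟨hO', ?_⟩, rfl⟩
    apply hinj
    rw [← negSet_image hneg]; exact hOneg
  · rintro ⟨O', ⟨hO', hOneg⟩, rfl⟩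
    exact ⟨by rw [ntOrbits_conj]; exact ⟨O', hO', rfl⟩, by rw [negSet_image hneg, hOneg]⟩

lemma posOrbits_conj {h : Equiv.Perm ℤ} (σ : Equiv.Perm ℤ) (hneg : ∀ x : ℤ, h (-x) = -h x) :
    posOrbits (h * σ * h⁻¹) = (Set.image ⇑h) '' posOrbits σ := by
  have hinj : Function.Injective (Set.image ⇑h) := Set.image_injective.mpr h.injective
  ext O
  constructor
  · rintro ⟨hO, hOneg⟩
    rw [ntOrbits_conj] at hO
    obtain ⟨O', hO', rfl⟩ := hO
    refine ⟨O', ⟨hO', fun hc => hOneg ?_⟩, rfl⟩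
    rw [negSet_image hneg, hc]
  · rintro ⟨O', ⟨hO', hOneg⟩, rfl⟩
    refine ⟨by rw [ntOrbits_conj]; exact ⟨O', hO', rfl⟩, fun hc => hOneg (hinj ?_)⟩
    rw [← negSet_image hneg]; exact hc

lemma phi_conj (qp qm : ℂ) {h : Equiv.Perm ℤ} (σ : Equiv.Perm ℤ)
    (hneg : ∀ x : ℤ, h (-x) = -h x) :
    phi qp qm (h * σ * h⁻¹) = phi qp qm σ := by
  have hinj : Function.Injective (Set.image ⇑h) := Set.image_injective.mpr h.injective
  have hpos : ∑ᶠ O ∈ posOrbits (h * σ * h⁻¹), (O.ncard - 1)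
      = ∑ᶠ O ∈ posOrbits σ, (O.ncard - 1) := by
    rw [posOrbits_conj σ hneg, finsum_mem_image hinj.injOn]
    exact finsum_mem_congr rfl fun O _ => by
      rw [Set.ncard_image_of_injective O h.injective]
  have hneg' : ∑ᶠ O ∈ negOrbits (h * σ * h⁻¹), (O.ncard / 2 - 1)
      = ∑ᶠ O ∈ negOrbits σ, (O.ncard / 2 - 1) := by
    rw [negOrbits_conj σ hneg, finsum_mem_image hinj.injOn]
    exact finsum_mem_congr rfl fun O _ => by
      rw [Set.ncard_image_of_injective O h.injective]
  have hcount : negCount (h * σ * h⁻¹) = negCount σ := by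
    rw [negCount, negCount, negOrbits_conj σ hneg, Set.ncard_image_of_injective _ hinj]
  rw [phi, phi, expPlus, expPlus, hpos, hneg', hcount]

end Conj
section Mult

open Equiv Set

lemma orbitSet_mul {σ τ : Equiv.Perm ℤ} (hd : σ.Disjoint τ) {i : ℤ} (hi : σ i ≠ i) :
    {j | (σ * τ).SameCycle i j} = {j | σ.SameCycle i j} := by
  have hτi : τ i = i := (hd i).resolve_left hi
  have hkey : ∀ n : ℤ, ((σ * τ) ^ n) i = (σ ^ n) i := by
    intro n
    rw [hd.commute.mul_zpow]
    simp only [Equiv.Perm.mul_apply]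
    rw [Equiv.Perm.zpow_apply_eq_self_of_apply_eq_self hτi]
  ext y
  simp only [mem_setOf_eq, Equiv.Perm.SameCycle]
  constructor
  · rintro ⟨n, rfl⟩; exact ⟨n, (hkey n).symm⟩
  · rintro ⟨n, rfl⟩; exact ⟨n, hkey n⟩

lemma ntOrbits_subset_mul {σ τ : Equiv.Perm ℤ} (hd : σ.Disjoint τ) :
    ntOrbits σ ⊆ ntOrbits (σ * τ) := by
  rintro O ⟨i, hi, rfl⟩
  have hτi : τ i = i := (hd i).resolve_left hi
  refine ⟨i, ?_, (orbitSet_mul hd hi).symm⟩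
  simpa [Equiv.Perm.mul_apply, hτi] using hi

lemma ntOrbits_mul {σ τ : Equiv.Perm ℤ} (hd : σ.Disjoint τ) :
    ntOrbits (σ * τ) = ntOrbits σ ∪ ntOrbits τ := by
  apply Set.Subset.antisymm
  · rintro O ⟨i, hi, rfl⟩
    by_cases hσi : σ i = i
    · have hτi : τ i ≠ i := by
        intro hc; exact hi (by simp [Equiv.Perm.mul_apply, hc, hσi])
      right
      refine ⟨i, hτi, ?_⟩
      rw [hd.commute.eq]
      exact orbitSet_mul hd.symm hτi
    · left
      exact ⟨i, hσi, orbitSet_mul hd hσi⟩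
  · refine Set.union_subset (ntOrbits_subset_mul hd) ?_
    have := ntOrbits_subset_mul hd.symm
    rwa [← hd.commute.eq] at this

lemma ntOrbits_disjoint {σ τ : Equiv.Perm ℤ} (hd : σ.Disjoint τ) :
    Disjoint (ntOrbits σ) (ntOrbits τ) := by
  rw [Set.disjoint_left]
  intro O hOσ hOτ
  obtain ⟨x, hx⟩ := ntOrbit_nonempty hOσ
  have h1 := ntOrbit_subset_supp hOσ hx
  have h2 := ntOrbit_subset_supp hOτ hx
  rcases hd x with h | h
  · exact h1 h
  · exact h2 h

lemma posOrbits_mul {σ τ : Equiv.Perm ℤ} (hd : σ.Disjoint τ) :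
    posOrbits (σ * τ) = posOrbits σ ∪ posOrbits τ := by
  ext O
  simp only [posOrbits, ntOrbits_mul hd, Set.mem_union, Set.mem_setOf_eq, Set.mem_sep_iff]
  tauto

lemma negOrbits_mul {σ τ : Equiv.Perm ℤ} (hd : σ.Disjoint τ) :
    negOrbits (σ * τ) = negOrbits σ ∪ negOrbits τ := by
  ext O
  simp only [negOrbits, ntOrbits_mul hd, Set.mem_union, Set.mem_setOf_eq, Set.mem_sep_iff]
  tauto

lemma neg_mem_posOrbits {σ : Equiv.Perm ℤ} (hσ : σ ∈ BInfSet) {O : Set ℤ}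
    (hO : O ∈ posOrbits σ) : negSet O ∈ posOrbits σ := by
  have hι : ∀ x : ℤ, (Equiv.neg ℤ) (-x) = -(Equiv.neg ℤ) x := fun x => by simp
  have hconj : (Equiv.neg ℤ) * σ * (Equiv.neg ℤ)⁻¹ = σ := by
    ext x
    simp only [Equiv.Perm.mul_apply]
    have : ((Equiv.neg ℤ)⁻¹ : Equiv.Perm ℤ) x = -x := by
      simp [Equiv.Perm.inv_def]
    rw [this]
    rw [hσ.1 x]
    simp
  have := posOrbits_conj (h := Equiv.neg ℤ) σ hι
  rw [hconj] at this
  rw [this]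
  refine ⟨O, hO, ?_⟩
  ext x; simp [negSet]

lemma negSet_negSet (O : Set ℤ) : negSet (negSet O) = O := by
  ext x; simp [negSet]

lemma negSet_ncard (O : Set ℤ) : (negSet O).ncard = O.ncard :=
  Set.ncard_image_of_injective O neg_injective

lemma even_finsum_pos {σ : Equiv.Perm ℤ} (hσ : σ ∈ BInfSet) :
    Even (∑ᶠ O ∈ posOrbits σ, (O.ncard - 1)) := by
  classical
  have hfin : (posOrbits σ).Finite := (ntOrbits_finite hσ.2).subset fun O hO => hO.1
  rw [← Set.Finite.coe_toFinset hfin, finsum_mem_coe_finset, even_iff_two_dvd]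
  have hcast : ((∑ O ∈ hfin.toFinset, (O.ncard - 1) : ℕ) : ZMod 2) = 0 := by
    rw [Nat.cast_sum]
    refine Finset.sum_involution (fun O _ => negSet O) ?_ ?_ ?_ ?_
    · intro O hO
      rw [negSet_ncard]
      exact CharTwo.add_self_eq_zero _
    · intro O hO _
      exact (hfin.mem_toFinset.mp hO).2
    · intro O hO
      exact hfin.mem_toFinset.mpr (neg_mem_posOrbits hσ (hfin.mem_toFinset.mp hO))
    · intro O hO
      exact negSet_negSet O
  exact (ZMod.natCast_eq_zero_iff _ 2).mp hcast

lemma phi_mul (qp qm : ℂ) {σ τ : Equiv.Perm ℤ} (hσ : σ ∈ BInfSet) (hτ : τ ∈ BInfSet)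
    (hd : σ.Disjoint τ) :
    phi qp qm (σ * τ) = phi qp qm σ * phi qp qm τ := by
  have hfσ : (ntOrbits σ).Finite := ntOrbits_finite hσ.2
  have hfτ : (ntOrbits τ).Finite := ntOrbits_finite hτ.2
  have hdo := ntOrbits_disjoint hd
  have hdpos : Disjoint (posOrbits σ) (posOrbits τ) :=
    hdo.mono (fun O hO => hO.1) (fun O hO => hO.1)
  have hdneg : Disjoint (negOrbits σ) (negOrbits τ) :=
    hdo.mono (fun O hO => hO.1) (fun O hO => hO.1)
  have hA : ∑ᶠ O ∈ posOrbits (σ * τ), (O.ncard - 1)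
      = (∑ᶠ O ∈ posOrbits σ, (O.ncard - 1)) + ∑ᶠ O ∈ posOrbits τ, (O.ncard - 1) := by
    rw [posOrbits_mul hd, finsum_mem_union hdpos (hfσ.subset fun O hO => hO.1)
      (hfτ.subset fun O hO => hO.1)]
  have hB : ∑ᶠ O ∈ negOrbits (σ * τ), (O.ncard / 2 - 1)
      = (∑ᶠ O ∈ negOrbits σ, (O.ncard / 2 - 1)) + ∑ᶠ O ∈ negOrbits τ, (O.ncard / 2 - 1) := by
    rw [negOrbits_mul hd, finsum_mem_union hdneg (hfσ.subset fun O hO => hO.1)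
      (hfτ.subset fun O hO => hO.1)]
  have hC : negCount (σ * τ) = negCount σ + negCount τ := by
    rw [negCount, negCount, negCount, negOrbits_mul hd]
    exact Set.ncard_union_eq hdneg (hfσ.subset fun O hO => hO.1)
      (hfτ.subset fun O hO => hO.1)
  have hEσ := even_finsum_pos hσ
  obtain ⟨aσ, haσ⟩ := hEσ
  have hdiv : (∑ᶠ O ∈ posOrbits σ, (O.ncard - 1) + ∑ᶠ O ∈ posOrbits τ, (O.ncard - 1)) / 2
      = (∑ᶠ O ∈ posOrbits σ, (O.ncard - 1)) / 2 + (∑ᶠ O ∈ posOrbits τ, (O.ncard - 1)) / 2 := by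
    omega
  rw [phi, phi, phi, expPlus, expPlus, expPlus, hA, hB, hC, hdiv]
  ring

end Mult
section CharIff

open Equiv Set

lemma phiB_eq_phi {qp qm : ℂ} {σ : Equiv.Perm ℤ} (h : σ ∈ BInfSet) :
    phiB qp qm σ = phi qp qm σ := if_pos h

lemma isPosDefOn_congr {f f' : Equiv.Perm ℤ → ℂ}
    (hff' : ∀ σ ∈ BInfSet, f σ = f' σ) :
    IsPosDefOn BInfSet f ↔ IsPosDefOn BInfSet f' := by
  have key : ∀ (k : ℕ) (g : Fin k → Equiv.Perm ℤ), (∀ i, g i ∈ BInfSet) → ∀ z : Fin k → ℂ,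
      ∑ i : Fin k, ∑ j : Fin k, z i * (starRingEnd ℂ) (z j) * f ((g j)⁻¹ * g i)
      = ∑ i : Fin k, ∑ j : Fin k, z i * (starRingEnd ℂ) (z j) * f' ((g j)⁻¹ * g i) := by
    intro k g hg z
    refine Finset.sum_congr rfl fun i _ => Finset.sum_congr rfl fun j _ => ?_
    rw [hff' _ (BInf_mul (BInf_inv (hg j)) (hg i))]
  constructor
  · intro hp k g hg z
    rw [← key k g hg z]; exact hp k g hg z
  · intro hp k g hg z
    rw [key k g hg z]; exact hp k g hg z

lemma char_iff_posdef (qp qm : ℂ) :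
    IsPosDefOn BInfSet (phi qp qm) ↔ phiB qp qm ∈ CharSetB := by
  have hc := isPosDefOn_congr (f := phi qp qm) (f' := phiB qp qm)
    (fun σ hσ => (phiB_eq_phi hσ).symm)
  constructor
  · intro hpd
    refine ⟨fun σ hσ => if_neg hσ, ?_, hc.mp hpd, ?_⟩
    · intro g hg h hh
      rw [phiB_eq_phi (BInf_mul (BInf_mul hh hg) (BInf_inv hh)), phiB_eq_phi hg]
      exact phi_conj qp qm g hh.1
    · rw [phiB_eq_phi BInf_one]; exact phi_one qp qm
  · intro hchar
    exact hc.mpr hchar.2.2.1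

end CharIff
section Blocks

open Equiv Set

/-- The block permutation function: permutes blocks `{x | i*N < |x| ≤ (i+1)*N}` according
to `π`, preserving sign and position within a block. -/
def PhiFun (N : ℕ) (π : Equiv.Perm ℕ) : ℤ → ℤ := fun x =>
  if x = 0 then 0
  else (Int.sign x) * ((π ((x.natAbs - 1) / N) * N + ((x.natAbs - 1) % N + 1) : ℕ) : ℤ)

lemma signk_natAbs {x : ℤ} (hx : x ≠ 0) {k : ℕ} :
    (Int.sign x * k).natAbs = k := by
  rw [Int.natAbs_mul, Int.natAbs_sign_of_ne_zero hx, one_mul, Int.natAbs_natCast]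

lemma signk_ne {x : ℤ} (hx : x ≠ 0) {k : ℕ} (hk : 0 < k) : Int.sign x * k ≠ 0 := by
  rcases lt_trichotomy x 0 with h | h | h
  · rw [Int.sign_eq_neg_one_of_neg h]; simp; omega
  · exact absurd h hx
  · rw [Int.sign_eq_one_of_pos h]; simp; omega

lemma signk_sign {x : ℤ} (hx : x ≠ 0) {k : ℕ} (hk : 0 < k) :
    Int.sign (Int.sign x * k) = Int.sign x := by
  rcases lt_trichotomy x 0 with h | h | h
  · rw [Int.sign_eq_neg_one_of_neg h]
    rw [Int.sign_eq_neg_one_of_neg (by simp; omega)]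
  · exact absurd h hx
  · rw [Int.sign_eq_one_of_pos h]
    rw [Int.sign_eq_one_of_pos (by simp; omega)]

lemma phiFun_id_of {N : ℕ} {π : Equiv.Perm ℕ} {x : ℤ}
    (h : π ((x.natAbs - 1) / N) = (x.natAbs - 1) / N) : PhiFun N π x = x := by
  rw [PhiFun]
  by_cases hx : x = 0
  · simp [hx]
  · rw [if_neg hx, h]
    have h1 : 1 ≤ x.natAbs := by omega
    have heq : (x.natAbs - 1) / N * N + ((x.natAbs - 1) % N + 1) = x.natAbs := by
      rw [Nat.mul_comm]
      have := Nat.div_add_mod (x.natAbs - 1) N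
      omega
    rw [heq, Int.sign_mul_natAbs]

lemma phiFun_zeroN {π : Equiv.Perm ℕ} (x : ℤ) : PhiFun 0 π x = x := by
  rw [PhiFun]
  by_cases hx : x = 0
  · simp [hx]
  · rw [if_neg hx]
    have h1 : 1 ≤ x.natAbs := by omega
    have heq : π ((x.natAbs - 1) / 0) * 0 + ((x.natAbs - 1) % 0 + 1) = x.natAbs := by
      simp only [Nat.mod_zero, Nat.mul_zero, Nat.zero_add]
      omega
    rw [heq, Int.sign_mul_natAbs]

lemma phiFun_spec {N : ℕ} (hN : 0 < N) (π : Equiv.Perm ℕ) {x : ℤ} (hx : x ≠ 0) :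
    PhiFun N π x ≠ 0 ∧ (PhiFun N π x).natAbs = π ((x.natAbs - 1) / N) * N + ((x.natAbs - 1) % N + 1)
    ∧ Int.sign (PhiFun N π x) = Int.sign x
    ∧ ((PhiFun N π x).natAbs - 1) / N = π ((x.natAbs - 1) / N)
    ∧ ((PhiFun N π x).natAbs - 1) % N = (x.natAbs - 1) % N := by
  set q := (x.natAbs - 1) / N with hq
  set r := (x.natAbs - 1) % N with hr
  have hrN : r < N := Nat.mod_lt _ hN
  have hk : 0 < π q * N + (r + 1) := by omega
  have hval : PhiFun N π x = Int.sign x * ((π q * N + (r + 1) : ℕ) : ℤ) := by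
    rw [PhiFun, if_neg hx]
  have h1 : (PhiFun N π x).natAbs = π q * N + (r + 1) := by
    rw [hval, signk_natAbs hx]
  have h2 : PhiFun N π x ≠ 0 := by
    rw [hval]; exact signk_ne hx hk
  have h3 : Int.sign (PhiFun N π x) = Int.sign x := by
    rw [hval]; exact signk_sign hx hk
  have hdiv : ((PhiFun N π x).natAbs - 1) / N = π q := by
    rw [h1]
    have : π q * N + (r + 1) - 1 = r + π q * N := by omega
    rw [this, Nat.add_mul_div_right r (π q) hN, Nat.div_eq_of_lt hrN, zero_add]
  have hmod : ((PhiFun N π x).natAbs - 1) % N = r := by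
    rw [h1]
    have : π q * N + (r + 1) - 1 = r + π q * N := by omega
    rw [this, Nat.add_mul_mod_self_right, Nat.mod_eq_of_lt hrN]
  exact ⟨h2, h1, h3, hdiv, hmod⟩

lemma phiFun_comp (N : ℕ) (π ρ : Equiv.Perm ℕ) (x : ℤ) :
    PhiFun N π (PhiFun N ρ x) = PhiFun N (π * ρ) x := by
  rcases Nat.eq_zero_or_pos N with hN | hN
  · subst hN; rw [phiFun_zeroN, phiFun_zeroN, phiFun_zeroN]
  by_cases hx : x = 0
  · subst hx
    rw [PhiFun, PhiFun, PhiFun]; simp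
  obtain ⟨h2, h1, h3, hdiv, hmod⟩ := phiFun_spec hN ρ hx
  rw [PhiFun, if_neg h2, hdiv, hmod, h3]
  rw [PhiFun, if_neg hx]
  simp [Equiv.Perm.mul_apply]

lemma phiFun_one (N : ℕ) (x : ℤ) : PhiFun N 1 x = x :=
  phiFun_id_of (by simp)

/-- The block permutation as a permutation of `ℤ`. -/
def PhiE (N : ℕ) (π : Equiv.Perm ℕ) : Equiv.Perm ℤ where
  toFun := PhiFun N π
  invFun := PhiFun N π⁻¹
  left_inv := fun x => by rw [phiFun_comp, inv_mul_cancel, phiFun_one]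
  right_inv := fun x => by rw [phiFun_comp, mul_inv_cancel, phiFun_one]

lemma PhiE_apply (N : ℕ) (π : Equiv.Perm ℕ) (x : ℤ) : PhiE N π x = PhiFun N π x := rfl

lemma PhiE_mul (N : ℕ) (π ρ : Equiv.Perm ℕ) : PhiE N (π * ρ) = PhiE N π * PhiE N ρ := by
  ext x
  rw [Equiv.Perm.mul_apply, PhiE_apply, PhiE_apply, PhiE_apply, phiFun_comp]

lemma PhiE_one (N : ℕ) : PhiE N 1 = 1 := by
  ext x; rw [PhiE_apply, phiFun_one]; rfl

lemma PhiE_inv (N : ℕ) (π : Equiv.Perm ℕ) : (PhiE N π)⁻¹ = PhiE N π⁻¹ := by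
  rw [eq_comm, eq_inv_iff_mul_eq_one, ← PhiE_mul, inv_mul_cancel, PhiE_one]

lemma PhiE_neg (N : ℕ) (π : Equiv.Perm ℕ) (x : ℤ) : PhiE N π (-x) = -PhiE N π x := by
  rw [PhiE_apply, PhiE_apply, PhiFun, PhiFun]
  by_cases hx : x = 0
  · simp [hx]
  · rw [if_neg (by omega : -x ≠ 0), if_neg hx]
    rw [Int.natAbs_neg, Int.sign_neg]
    ring

lemma PhiE_BInf {N : ℕ} (hN : 0 < N) (π : Equiv.Perm ℕ) {M : ℕ}
    (hM : ∀ i, π i ≠ i → i ≤ M) : PhiE N π ∈ BInfSet := by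
  refine ⟨PhiE_neg N π, ?_⟩
  refine (Set.finite_Icc (-((M+1)*N : ℕ) : ℤ) ((M+1)*N : ℕ)).subset ?_
  intro x hx
  simp only [Set.mem_setOf_eq] at hx
  have hπ : π ((x.natAbs - 1) / N) ≠ (x.natAbs - 1) / N := by
    intro hc
    exact hx (by rw [PhiE_apply]; exact phiFun_id_of hc)
  have hb := hM _ hπ
  have : x.natAbs - 1 < (M + 1) * N := (Nat.div_lt_iff_lt_mul hN).mp (by omega)
  have hxne : x ≠ 0 := by
    intro hc; subst hc; exact hx (by rw [PhiE_apply, PhiFun]; simp)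
  simp only [Set.mem_Icc]
  omega

/-- `PhiE` commutes with permutations supported in the `0`-block. -/
lemma PhiE_commute {N : ℕ} (hN : 0 < N) {ρ : Equiv.Perm ℕ} (hρ0 : ρ 0 = 0)
    {σ : Equiv.Perm ℤ} (hsupp : ∀ x : ℤ, σ x ≠ x → x.natAbs ≤ N) :
    PhiE N ρ * σ = σ * PhiE N ρ := by
  have hσS : ∀ x : ℤ, x.natAbs ≤ N → (σ x).natAbs ≤ N := by
    intro x hx
    by_cases h : σ x = x
    · rwa [h]
    · by_contra hgt
      have h2 : σ (σ x) = σ x := by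
        by_contra h3
        exact hgt (hsupp _ h3)
      have := σ.injective h2
      exact h this
  have hfix : ∀ x : ℤ, x.natAbs ≤ N → PhiE N ρ x = x := by
    intro x hx
    by_cases hx0 : x = 0
    · subst hx0; rw [PhiE_apply, PhiFun]; simp
    · apply phiFun_id_of
      have : (x.natAbs - 1) / N = 0 := Nat.div_eq_of_lt (by omega)
      rw [this, hρ0]
  have hout : ∀ x : ℤ, N < x.natAbs → N < (PhiE N ρ x).natAbs := by
    intro x hx
    have hxne : x ≠ 0 := by omega
    obtain ⟨h2, h1, h3, hdiv, hmod⟩ := phiFun_spec hN ρ hxne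
    rw [PhiE_apply, h1]
    have hq : 1 ≤ (x.natAbs - 1) / N := (Nat.one_le_div_iff hN).mpr (by omega)
    have hρq : ρ ((x.natAbs - 1) / N) ≠ 0 := by
      intro hc
      have : (x.natAbs - 1) / N = 0 := by
        have := ρ.injective (hc.trans hρ0.symm)
        exact this
      omega
    have : 1 ≤ ρ ((x.natAbs - 1) / N) := by omega
    calc N < 1 * N + ((x.natAbs - 1) % N + 1) := by omega
    _ ≤ ρ ((x.natAbs - 1) / N) * N + ((x.natAbs - 1) % N + 1) := by
        apply Nat.add_le_add_right
        exact Nat.mul_le_mul_right N this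
  ext x
  simp only [Equiv.Perm.mul_apply]
  by_cases hx : x.natAbs ≤ N
  · rw [hfix x hx, hfix (σ x) (hσS x hx)]
  · push_neg at hx
    have h1 : σ x = x := by
      by_contra h
      exact absurd (hsupp x h) (by omega)
    have h2 : σ (PhiE N ρ x) = PhiE N ρ x := by
      by_contra h
      exact absurd (hsupp _ h) (by have := hout x hx; omega)
    rw [h1, h2]

/-- The copy of σ in block `i`. -/
def cp (N i : ℕ) (σ : Equiv.Perm ℤ) : Equiv.Perm ℤ :=
  PhiE N (Equiv.swap 0 i) * σ * (PhiE N (Equiv.swap 0 i))⁻¹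

lemma swap_BInf {N : ℕ} (hN : 0 < N) (a b : ℕ) : PhiE N (Equiv.swap a b) ∈ BInfSet := by
  refine PhiE_BInf hN _ (M := max a b) ?_
  intro i hi
  by_cases hia : i = a
  · subst hia; exact le_max_left _ _
  by_cases hib : i = b
  · subst hib; exact le_max_right _ _
  · exact absurd (Equiv.swap_apply_of_ne_of_ne hia hib) hi

lemma cp_BInf {N : ℕ} (hN : 0 < N) (i : ℕ) {σ : Equiv.Perm ℤ} (hσ : σ ∈ BInfSet) :
    cp N i σ ∈ BInfSet :=
  BInf_mul (BInf_mul (swap_BInf hN 0 i) hσ) (BInf_inv (swap_BInf hN 0 i))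

lemma cp_phi (qp qm : ℂ) (N i : ℕ) (σ : Equiv.Perm ℤ) :
    phi qp qm (cp N i σ) = phi qp qm σ :=
  phi_conj qp qm σ (PhiE_neg N _)

lemma BInf_zero {σ : Equiv.Perm ℤ} (hσ : σ ∈ BInfSet) : σ 0 = 0 := by
  have := hσ.1 0
  simp only [neg_zero] at this
  omega

lemma cp_supp {N : ℕ} (hN : 0 < N) {i : ℕ} {σ : Equiv.Perm ℤ} (hσ0 : σ 0 = 0)
    (hsupp : ∀ x : ℤ, σ x ≠ x → x.natAbs ≤ N) :
    ∀ x : ℤ, cp N i σ x ≠ x → x ≠ 0 ∧ (x.natAbs - 1) / N = i := by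
  intro x hx
  rw [cp] at hx
  simp only [Equiv.Perm.mul_apply] at hx
  have hy : σ ((PhiE N (Equiv.swap 0 i))⁻¹ x) ≠ (PhiE N (Equiv.swap 0 i))⁻¹ x := by
    intro hc
    exact hx (by rw [hc, perm_apply_inv_self])
  set y := (PhiE N (Equiv.swap 0 i))⁻¹ x with hydef
  have hyN : y.natAbs ≤ N := hsupp y hy
  have hyne : y ≠ 0 := by
    intro hc
    rw [hc] at hy
    exact hy hσ0
  have hxy : x = PhiE N (Equiv.swap 0 i) y := by rw [hydef, perm_apply_inv_self]
  obtain ⟨h2, h1, h3, hdiv, hmod⟩ := phiFun_spec hN (Equiv.swap 0 i) hyne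
  have hq : (y.natAbs - 1) / N = 0 := Nat.div_eq_of_lt (by omega)
  constructor
  · rw [hxy]; exact h2
  · rw [hxy, ← PhiE_apply] at *
    rw [hdiv, hq, Equiv.swap_apply_left]

lemma cp_disjoint {N : ℕ} (hN : 0 < N) {i j : ℕ} (hij : i ≠ j) {σ : Equiv.Perm ℤ} (hσ0 : σ 0 = 0)
    (hsupp : ∀ x : ℤ, σ x ≠ x → x.natAbs ≤ N) :
    (cp N i σ).Disjoint (cp N j σ) := by
  intro x
  by_contra h
  push_neg at h
  obtain ⟨h1, h2⟩ := h
  obtain ⟨-, hi⟩ := cp_supp hN hσ0 hsupp x h1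
  obtain ⟨-, hj⟩ := cp_supp hN hσ0 hsupp x h2
  exact hij (hi.symm.trans hj)

lemma cp_conj {N : ℕ} (hN : 0 < N) {σ : Equiv.Perm ℤ}
    (hsupp : ∀ x : ℤ, σ x ≠ x → x.natAbs ≤ N)
    {π : Equiv.Perm ℕ} (i : ℕ) :
    PhiE N π * cp N i σ * (PhiE N π)⁻¹ = cp N (π i) σ := by
  set ρ : Equiv.Perm ℕ := (Equiv.swap 0 (π i))⁻¹ * (π * Equiv.swap 0 i) with hρdef
  have hρ0 : ρ 0 = 0 := by
    simp only [hρdef, Equiv.Perm.mul_apply, Equiv.Perm.inv_def]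
    rw [Equiv.swap_apply_left, Equiv.symm_swap]
    exact Equiv.swap_apply_right 0 (π i)
  have hcomm := PhiE_commute hN hρ0 hsupp
  have hfact : π * Equiv.swap 0 i = Equiv.swap 0 (π i) * ρ := by
    rw [hρdef, ← mul_assoc, mul_inv_cancel, one_mul]
  rw [cp, cp]
  rw [show PhiE N π * (PhiE N (Equiv.swap 0 i) * σ * (PhiE N (Equiv.swap 0 i))⁻¹) * (PhiE N π)⁻¹
      = (PhiE N π * PhiE N (Equiv.swap 0 i)) * σ * (PhiE N π * PhiE N (Equiv.swap 0 i))⁻¹ by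
    group]
  rw [← PhiE_mul, hfact, PhiE_mul]
  have : PhiE N ρ * σ * (PhiE N ρ)⁻¹ = σ := by
    rw [hcomm]; group
  rw [show PhiE N (Equiv.swap 0 (π i)) * PhiE N ρ * σ * (PhiE N (Equiv.swap 0 (π i)) * PhiE N ρ)⁻¹
      = PhiE N (Equiv.swap 0 (π i)) * (PhiE N ρ * σ * (PhiE N ρ)⁻¹) * (PhiE N (Equiv.swap 0 (π i)))⁻¹ by
    group]
  rw [this]

end Blocks
section Herm

open Equiv Set Complex

lemma char_one {ψ : Equiv.Perm ℤ → ℂ} (hψ : ψ ∈ CharSetB) : ψ 1 = 1 := hψ.2.2.2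

lemma char_herm {ψ : Equiv.Perm ℤ → ℂ} (hψ : ψ ∈ CharSetB) {σ : Equiv.Perm ℤ}
    (hσ : σ ∈ BInfSet) : ψ σ⁻¹ = (starRingEnd ℂ) (ψ σ) := by
  have hmem : ∀ i, (![1, σ] : Fin 2 → Equiv.Perm ℤ) i ∈ BInfSet := by
    intro i; fin_cases i
    · exact BInf_one
    · exact hσ
  have h1 := hψ.2.2.1 2 ![1, σ] hmem ![1, 1]
  have h2 := hψ.2.2.1 2 ![1, σ] hmem ![1, Complex.I]
  rw [Complex.le_def] at h1 h2
  set u := ψ σ with hu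
  set v := ψ σ⁻¹ with hv
  have e1 : ∑ i : Fin 2, ∑ j : Fin 2,
      (![1, (1:ℂ)]) i * (starRingEnd ℂ) ((![1, (1:ℂ)]) j) * ψ (((![1, σ]) j)⁻¹ * (![1, σ]) i)
      = 2 + v + u := by
    simp only [Fin.sum_univ_two, Matrix.cons_val_zero, Matrix.cons_val_one, Matrix.head_cons,
      inv_one, one_mul, mul_one, map_one]
    rw [char_one hψ, ← hv, ← hu, inv_mul_cancel, char_one hψ]
    ring
  have e2 : ∑ i : Fin 2, ∑ j : Fin 2,
      (![1, Complex.I]) i * (starRingEnd ℂ) ((![1, Complex.I]) j) * ψ (((![1, σ]) j)⁻¹ * (![1, σ]) i)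
      = 2 + (- Complex.I) * v + Complex.I * u := by
    simp only [Fin.sum_univ_two, Matrix.cons_val_zero, Matrix.cons_val_one, Matrix.head_cons,
      inv_one, one_mul, mul_one, map_one, Complex.conj_I]
    rw [char_one hψ, ← hv, ← hu, inv_mul_cancel, char_one hψ]
    have hI : Complex.I * -Complex.I * 1 = 1 := by
      have := Complex.I_mul_I
      linear_combination -this
    rw [hI]
    ring
  rw [e1] at h1
  rw [e2] at h2
  have him1 : v.im + u.im = 0 := by
    have := h1.2
    simp only [Complex.add_im, Complex.zero_im] at this
    simp at this
    linarith
  have him2 : u.re - v.re = 0 := by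
    have := h2.2
    simp only [Complex.add_im, Complex.zero_im, Complex.mul_im, Complex.neg_re, Complex.neg_im,
      Complex.I_re, Complex.I_im] at this
    simp at this
    linarith
  apply Complex.ext
  · simp only [Complex.conj_re]
    linarith
  · simp only [Complex.conj_im]
    linarith

lemma convex_normSq_eq {x y : ℂ} {t s : ℝ} (ht : 0 < t) (hs : 0 < s) (hts : t + s = 1)
    (h : t * Complex.normSq x + s * Complex.normSq y ≤ Complex.normSq ((t:ℂ) * x + (s:ℂ) * y)) :
    x = y := by
  have hs' : s = 1 - t := by linarith
  subst hs'
  have e : t * Complex.normSq x + (1-t) * Complex.normSq y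
      - Complex.normSq ((t:ℂ) * x + ((1-t:ℝ):ℂ) * y) = t*(1-t)*Complex.normSq (x - y) := by
    simp only [Complex.normSq_apply, Complex.add_re, Complex.add_im, Complex.mul_re,
      Complex.mul_im, Complex.ofReal_re, Complex.ofReal_im, Complex.sub_re, Complex.sub_im]
    ring
  have h0 : t*(1-t)*Complex.normSq (x - y) ≤ 0 := by linarith
  have hpos : 0 < t*(1-t) := by nlinarith
  have : Complex.normSq (x - y) ≤ 0 := by
    by_contra hc
    push_neg at hc
    nlinarith
  have hz : Complex.normSq (x - y) = 0 := le_antisymm this (Complex.normSq_nonneg _)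
  have := Complex.normSq_eq_zero.mp hz
  linear_combination this

end Herm
section Gram

open Equiv Set Complex Filter

lemma gram_bound {ψ : Equiv.Perm ℤ → ℂ} (hψ : ψ ∈ CharSetB) (g : ℕ → Equiv.Perm ℤ)
    (hB : ∀ i, g i ∈ BInfSet) (h0 : g 0 = 1)
    (hval : ∀ i, 1 ≤ i → ψ (g i) = ψ (g 1))
    (hpair : ∀ i j, 1 ≤ i → 1 ≤ j → i ≠ j → ψ ((g j)⁻¹ * g i) = ψ ((g 2)⁻¹ * g 1)) :
    Complex.normSq (ψ (g 1)) ≤ (ψ ((g 2)⁻¹ * g 1)).re := by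
  classical
  set a := ψ (g 1) with ha
  set c := ψ ((g 2)⁻¹ * g 1) with hc
  have hV : ∀ i j : ℕ, ψ ((g j)⁻¹ * g i) =
      if j = 0 then (if i = 0 then 1 else a)
      else if i = 0 then (starRingEnd ℂ) a else if i = j then 1 else c := by
    intro i j
    by_cases hj : j = 0
    · subst hj
      rw [if_pos rfl, h0, inv_one, one_mul]
      by_cases hi : i = 0
      · subst hi; rw [if_pos rfl, h0, char_one hψ]
      · rw [if_neg hi]; exact hval i (by omega)
    · rw [if_neg hj]
      by_cases hi : i = 0
      · rw [if_pos hi, hi, h0, mul_one, char_herm hψ (hB j), hval j (by omega)]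
      · rw [if_neg hi]
        by_cases hij : i = j
        · rw [if_pos hij, hij, inv_mul_cancel, char_one hψ]
        · rw [if_neg hij]; exact hpair i j (by omega) (by omega) hij
  have step1 : ∀ n : ℕ, 1 ≤ n →
      (n:ℝ)^2 * Complex.normSq a ≤ (n:ℝ) + (n:ℝ)*((n:ℝ)-1)*c.re := by
    intro n hn
    set z : Fin (n+1) → ℂ := fun i => if (i : ℕ) = 0 then -(n : ℂ) * a else 1 with hz
    have hpd := hψ.2.2.1 (n+1) (fun i : Fin (n+1) => g i.val) (fun i => hB i.val) z
    have hdiag : ∀ i : Fin n, ∑ j : Fin n, (if i = j then (1:ℂ) else c)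
        = 1 + ((n:ℂ) - 1) * c := by
      intro i
      have hsplit : ∀ j : Fin n, (if i = j then (1:ℂ) else c)
          = (if i = j then 1 - c else 0) + c := by
        intro j; by_cases h : i = j <;> simp [h]
      rw [Finset.sum_congr rfl fun j _ => hsplit j, Finset.sum_add_distrib,
        Finset.sum_ite_eq, if_pos (Finset.mem_univ i), Finset.sum_const, Finset.card_univ,
        Fintype.card_fin, nsmul_eq_mul]
      ring
    have hQ : ∑ i : Fin (n+1), ∑ j : Fin (n+1), z i * (starRingEnd ℂ) (z j)
        * ψ (((fun i : Fin (n+1) => g i.val) j)⁻¹ * (fun i : Fin (n+1) => g i.val) i)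
        = (n:ℂ) + (n:ℂ)*((n:ℂ)-1)*c - (n:ℂ)^2 * (Complex.normSq a : ℂ) := by
      have hrw : ∀ i j : Fin (n+1), z i * (starRingEnd ℂ) (z j) * ψ ((g (j:ℕ))⁻¹ * g (i:ℕ))
          = (if (i:ℕ) = 0 then -(n : ℂ) * a else 1)
            * (starRingEnd ℂ) (if (j:ℕ) = 0 then -(n : ℂ) * a else 1) *
            (if (j:ℕ) = 0 then (if (i:ℕ) = 0 then 1 else a)
             else if (i:ℕ) = 0 then (starRingEnd ℂ) a else if (i:ℕ) = (j:ℕ) then 1 else c) := by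
        intro i j; rw [hV (i:ℕ) (j:ℕ), hz]
      calc ∑ i : Fin (n+1), ∑ j : Fin (n+1), z i * (starRingEnd ℂ) (z j)
            * ψ (((fun i : Fin (n+1) => g i.val) j)⁻¹ * (fun i : Fin (n+1) => g i.val) i)
          = ∑ i : Fin (n+1), ∑ j : Fin (n+1),
            (if (i:ℕ) = 0 then -(n : ℂ) * a else 1)
            * (starRingEnd ℂ) (if (j:ℕ) = 0 then -(n : ℂ) * a else 1) *
            (if (j:ℕ) = 0 then (if (i:ℕ) = 0 then 1 else a)
             else if (i:ℕ) = 0 then (starRingEnd ℂ) a else if (i:ℕ) = (j:ℕ) then 1 else c) :=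
            Finset.sum_congr rfl fun i _ => Finset.sum_congr rfl fun j _ => hrw i j
        _ = (n:ℂ) + (n:ℂ)*((n:ℂ)-1)*c - (n:ℂ)^2 * (Complex.normSq a : ℂ) := by
            rw [show ((Complex.normSq a : ℝ) : ℂ) = a * (starRingEnd ℂ) a from
              (Complex.mul_conj a).symm]
            simp only [Fin.sum_univ_succ, Fin.val_zero, Fin.val_succ, Nat.succ_ne_zero,
              if_false, if_true, eq_self_iff_true, one_mul, mul_one, map_one,
              add_left_inj, Fin.val_inj, Fin.succ_inj]
            simp only [hdiag]
            simp only [Finset.sum_const, Finset.card_univ, Fintype.card_fin, nsmul_eq_mul,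
              smul_eq_mul, map_mul, map_neg, Complex.conj_natCast]
            ring
    rw [hQ] at hpd
    have h1 := (Complex.le_def.mp hpd).1
    have hsplit : (n:ℂ) + (n:ℂ)*((n:ℂ)-1)*c - (n:ℂ)^2 * (Complex.normSq a : ℂ)
        = (((n:ℝ) - (n:ℝ)^2 * Complex.normSq a : ℝ) : ℂ) + (((n:ℝ)*((n:ℝ)-1) : ℝ) : ℂ) * c := by
      push_cast
      ring
    rw [hsplit] at h1
    simp only [Complex.add_re, Complex.ofReal_re, Complex.mul_re, Complex.ofReal_im,
      Complex.zero_re, zero_mul, sub_zero] at h1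
    linarith [h1]
  have l1 : Tendsto (fun n : ℕ => (1:ℝ)/n) atTop (nhds 0) :=
    tendsto_one_div_atTop_nhds_zero_nat
  have hlim : Tendsto (fun n : ℕ => (1:ℝ)/n + (1 - 1/n) * c.re) atTop (nhds c.re) := by
    have h2 : Tendsto (fun n : ℕ => ((1:ℝ) - 1/n) * c.re) atTop (nhds ((1 - 0) * c.re)) :=
      (tendsto_const_nhds.sub l1).mul tendsto_const_nhds
    have := l1.add h2
    simpa using this
  refine ge_of_tendsto hlim ?_
  rw [Filter.eventually_atTop]
  refine ⟨1, fun n hn => ?_⟩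
  have hst := step1 n hn
  have hnpos : (0:ℝ) < n := by exact_mod_cast Nat.lt_of_lt_of_le Nat.zero_lt_one hn
  rw [show (1:ℝ)/n + (1 - 1/n)*c.re = ((n:ℝ) + (n:ℝ)*((n:ℝ)-1)*c.re)/((n:ℝ)^2) by
    field_simp]
  rw [le_div_iff₀ (by positivity)]
  nlinarith [hst]

end Gram
section Extreme

open Equiv Set Complex

lemma pair_perm (i j : ℕ) (hi : 1 ≤ i) (hj : 1 ≤ j) (hij : i ≠ j) :
    ∃ π : Equiv.Perm ℕ, π i = 1 ∧ π j = 2 ∧ ∃ M, ∀ k, π k ≠ k → k ≤ M := by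
  set m₁ := max (max i j) 2 + 1 with hm1
  set m₂ := max (max i j) 2 + 2 with hm2
  have hii : i ≤ max (max i j) 2 := le_trans (le_max_left i j) (le_max_left _ 2)
  have hjj : j ≤ max (max i j) 2 := le_trans (le_max_right i j) (le_max_left _ 2)
  have h22 : 2 ≤ max (max i j) 2 := le_max_right _ 2
  refine ⟨(Equiv.swap 2 m₁ * Equiv.swap 1 m₂) * (Equiv.swap j m₁ * Equiv.swap i m₂),
    ?_, ?_, ⟨m₂, ?_⟩⟩
  · simp only [Equiv.Perm.mul_apply]
    rw [Equiv.swap_apply_left,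
      Equiv.swap_apply_of_ne_of_ne (by omega : m₂ ≠ j) (by omega : m₂ ≠ m₁),
      Equiv.swap_apply_right,
      Equiv.swap_apply_of_ne_of_ne (by omega : (1:ℕ) ≠ 2) (by omega : (1:ℕ) ≠ m₁)]
  · simp only [Equiv.Perm.mul_apply]
    rw [Equiv.swap_apply_of_ne_of_ne (fun h => hij h.symm) (by omega : j ≠ m₂),
      Equiv.swap_apply_left,
      Equiv.swap_apply_of_ne_of_ne (by omega : m₁ ≠ 1) (by omega : m₁ ≠ m₂),
      Equiv.swap_apply_right]
  · intro k hk
    by_contra hgt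
    push_neg at hgt
    apply hk
    simp only [Equiv.Perm.mul_apply]
    rw [Equiv.swap_apply_of_ne_of_ne (by omega : k ≠ i) (by omega : k ≠ m₂),
      Equiv.swap_apply_of_ne_of_ne (by omega : k ≠ j) (by omega : k ≠ m₁),
      Equiv.swap_apply_of_ne_of_ne (by omega : k ≠ 1) (by omega : k ≠ m₂),
      Equiv.swap_apply_of_ne_of_ne (by omega : k ≠ 2) (by omega : k ≠ m₁)]

lemma extreme_of_char (qp qm : ℂ) (hchar : phiB qp qm ∈ CharSetB) :
    phiB qp qm ∈ Set.extremePoints ℝ CharSetB := by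
  rw [mem_extremePoints]
  refine ⟨hchar, ?_⟩
  intro f hf g₂ hg₂ hseg
  obtain ⟨t, s, ht, hs, hts, heq⟩ := hseg
  have hfg : f = g₂ := by
    funext σ
    by_cases hσ : σ ∈ BInfSet
    swap
    · rw [hf.1 σ hσ, hg₂.1 σ hσ]
    obtain ⟨M0, hM0⟩ : ∃ M0 : ℕ, ∀ x : ℤ, σ x ≠ x → x.natAbs ≤ M0 := by
      obtain ⟨M0, hM0⟩ := (hσ.2.image Int.natAbs).bddAbove
      exact ⟨M0, fun x hx => hM0 (Set.mem_image_of_mem _ hx)⟩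
    set N := M0 + 1 with hNdef
    have hN : 0 < N := Nat.succ_pos M0
    have hsupp : ∀ x : ℤ, σ x ≠ x → x.natAbs ≤ N := fun x hx => (hM0 x hx).trans (Nat.le_succ M0)
    have hσ0 : σ 0 = 0 := BInf_zero hσ
    set G : ℕ → Equiv.Perm ℤ := fun i => if i = 0 then 1 else cp N i σ with hG
    have hGB : ∀ i, G i ∈ BInfSet := by
      intro i; rw [hG]; dsimp only
      split
      · exact BInf_one
      · exact cp_BInf hN i hσ
    have hG0 : G 0 = 1 := rfl
    have hGi : ∀ i, 1 ≤ i → G i = cp N i σ := by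
      intro i hi; rw [hG]; simp only [if_neg (by omega : ¬ i = 0)]
    have hcent : ∀ ψ : Equiv.Perm ℤ → ℂ, ψ ∈ CharSetB →
        (∀ i, 1 ≤ i → ψ (G i) = ψ (G 1)) ∧
        (∀ i j, 1 ≤ i → 1 ≤ j → i ≠ j → ψ ((G j)⁻¹ * G i) = ψ ((G 2)⁻¹ * G 1)) ∧
        ψ (G 1) = ψ σ := by
      intro ψ hψ
      have hGσ : ∀ i, 1 ≤ i → ψ (G i) = ψ σ := by
        intro i hi
        rw [hGi i hi, cp]
        exact hψ.2.1 σ hσ _ (swap_BInf hN 0 i)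
      refine ⟨fun i hi => (hGσ i hi).trans (hGσ 1 le_rfl).symm, ?_, hGσ 1 le_rfl⟩
      intro i j hi hj hij
      obtain ⟨π, hπi, hπj, M, hM⟩ := pair_perm i j hi hj hij
      have hPB : PhiE N π ∈ BInfSet := PhiE_BInf hN π hM
      have e1 : PhiE N π * ((G j)⁻¹ * G i) * (PhiE N π)⁻¹ = (G 2)⁻¹ * G 1 := by
        rw [hGi i hi, hGi j hj, hGi 1 le_rfl, hGi 2 (by omega)]
        rw [show PhiE N π * ((cp N j σ)⁻¹ * cp N i σ) * (PhiE N π)⁻¹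
            = (PhiE N π * cp N j σ * (PhiE N π)⁻¹)⁻¹ * (PhiE N π * cp N i σ * (PhiE N π)⁻¹) by
          group]
        rw [cp_conj hN hsupp j, cp_conj hN hsupp i, hπi, hπj]
      have h2 := hψ.2.1 ((G j)⁻¹ * G i) (BInf_mul (BInf_inv (hGB j)) (hGB i)) (PhiE N π) hPB
      rw [e1] at h2
      exact h2.symm
    obtain ⟨hfval, hfpair, hfσ⟩ := hcent f hf
    obtain ⟨hgval, hgpair, hgσ⟩ := hcent g₂ hg₂
    have hbf := gram_bound hf G hGB hG0 hfval hfpair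
    have hbg := gram_bound hg₂ G hGB hG0 hgval hgpair
    rw [hfσ] at hbf
    rw [hgσ] at hbg
    set χ := phiB qp qm with hχ
    set e₀ := (G 2)⁻¹ * G 1 with he₀
    have he₀B : e₀ ∈ BInfSet := BInf_mul (BInf_inv (hGB 2)) (hGB 1)
    have hχσ : χ σ = phi qp qm σ := phiB_eq_phi hσ
    have hχreal : (starRingEnd ℂ) (χ σ) = χ σ := by
      have h1 := char_herm hchar hσ
      have h2 : χ σ⁻¹ = χ σ := by
        rw [hχ, phiB_eq_phi (BInf_inv hσ), phiB_eq_phi hσ, phi_inv]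
      rw [← h1, h2]
    have hχe₀ : χ e₀ = χ σ * χ σ := by
      show phiB qp qm ((G 2)⁻¹ * G 1) = phiB qp qm σ * phiB qp qm σ
      rw [hGi 1 le_rfl, hGi 2 (by omega)]
      rw [phiB_eq_phi (BInf_mul (BInf_inv (cp_BInf hN 2 hσ)) (cp_BInf hN 1 hσ))]
      rw [phi_mul qp qm (BInf_inv (cp_BInf hN 2 hσ)) (cp_BInf hN 1 hσ)
        ((cp_disjoint hN (by omega : (2:ℕ) ≠ 1) hσ0 hsupp).inv_left)]
      rw [phi_inv, cp_phi, cp_phi, phiB_eq_phi hσ]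
    have hmixσ : (t:ℂ) * f σ + (s:ℂ) * g₂ σ = χ σ := by
      have h3 := congrFun heq σ
      simpa [Pi.add_apply, Pi.smul_apply, Complex.real_smul] using h3
    have hmixe : (t:ℂ) * f e₀ + (s:ℂ) * g₂ e₀ = χ e₀ := by
      have h3 := congrFun heq e₀
      simpa [Pi.add_apply, Pi.smul_apply, Complex.real_smul] using h3
    have him : (χ σ).im = 0 := by
      have h3 := congrArg Complex.im hχreal
      simp only [Complex.conj_im] at h3
      linarith
    have hre : t * (f e₀).re + s * (g₂ e₀).re = Complex.normSq (χ σ) := by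
      have h1 : (χ e₀).re = Complex.normSq (χ σ) := by
        rw [hχe₀, Complex.normSq_apply, Complex.mul_re, him]
        ring
      calc t * (f e₀).re + s * (g₂ e₀).re = ((t:ℂ) * f e₀ + (s:ℂ) * g₂ e₀).re := by
            simp [Complex.add_re, Complex.mul_re, Complex.ofReal_re, Complex.ofReal_im]
        _ = (χ e₀).re := by rw [hmixe]
        _ = _ := h1
    have hineq : t * Complex.normSq (f σ) + s * Complex.normSq (g₂ σ)
        ≤ Complex.normSq ((t:ℂ) * f σ + (s:ℂ) * g₂ σ) := by
      rw [hmixσ]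
      calc t * Complex.normSq (f σ) + s * Complex.normSq (g₂ σ)
          ≤ t * (f e₀).re + s * (g₂ e₀).re := by nlinarith [ht.le, hs.le, hbf, hbg]
        _ = Complex.normSq (χ σ) := hre
    exact convex_normSq_eq ht hs hts hineq
  have hgphi : g₂ = phiB qp qm := by
    rw [← heq, hfg]
    funext τ
    simp only [Pi.add_apply, Pi.smul_apply]
    rw [← add_smul, hts, one_smul]
  exact ⟨hfg.trans hgphi, hgphi⟩

end Extreme

/-- positive definiteness of φ_{q₊,q₋} on B(∞), being a character of B(∞)
and being an extreme character of B(∞) are all equivalent. -/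
theorem posdef_iff_character_iff_extreme (qp qm : ℂ) :
    (IsPosDefOn BInfSet (phi qp qm) ↔ phiB qp qm ∈ CharSetB) ∧
    (phiB qp qm ∈ CharSetB ↔ phiB qp qm ∈ Set.extremePoints ℝ CharSetB) := by
  refine ⟨char_iff_posdef qp qm, ?_⟩
  constructor
  · exact extreme_of_char qp qm
  · intro hext
    exact hext.1

end TypeB
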